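/- Let V be an n-dimensional vector space over a field K of characteristic zero and φ an endomorphism of V. Then the characteristic polynomial of φ equals its minimal polynomial if and only if the centralizer of φ in End(V) equals the algebra K[φ] of polynomials in φ. -/

import Mathlib

set_option maxHeartbeats 1000000

open Polynomial Module DirectSum

section Aux

variable {K : Type*} [Field K]

theorem stmt1Aux.finrank_quot (q : K[X]) (hq : q ≠ 0) :
    Module.finrank K (K[X] ⧸ (K[X] ∙ q)) = q.natDegree := by
  have := (AdjoinRoot.powerBasis hq).finrank
  exact this

theorem stmt1Aux.finite_quot (q : K[X]) (hq : q ≠ 0) : Module.Finite K (K[X] ⧸ (K[X] ∙ q)) :=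
  (AdjoinRoot.powerBasis hq).finite

theorem stmt1Aux.mk_eq_zero_iff (q r : K[X]) :
    (Submodule.Quotient.mk r : K[X] ⧸ (K[X] ∙ q)) = 0 ↔ q ∣ r := by
  rw [Submodule.Quotient.mk_eq_zero]
  exact Ideal.mem_span_singleton

theorem stmt1Aux.smul_mk (q r s : K[X]) :
    r • (Submodule.Quotient.mk s : K[X] ⧸ (K[X] ∙ q)) = Submodule.Quotient.mk (r * s) := by
  rw [← Submodule.Quotient.mk_smul]; rfl

variable {ι : Type*} [Fintype ι] [DecidableEq ι] (q : ι → K[X])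

/-- The element of the direct sum whose components are all `mk 1`. -/
noncomputable def stmt1Aux.genx : ⨁ i, K[X] ⧸ (K[X] ∙ q i) :=
  ∑ i, DirectSum.lof K[X] ι (fun i => K[X] ⧸ (K[X] ∙ q i)) i (Submodule.Quotient.mk 1)

theorem stmt1Aux.smul_genx_eq_zero_iff (r : K[X]) :
    r • stmt1Aux.genx q = 0 ↔ ∀ i, q i ∣ r := by
  rw [stmt1Aux.genx, Finset.smul_sum]
  simp_rw [← map_smul]
  constructor
  · intro h i
    have := congrArg (DirectSum.component K[X] ι _ i) h
    rw [map_sum, map_zero] at this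
    rw [Finset.sum_eq_single i] at this
    · rw [DirectSum.component.lof_self] at this
      rw [← stmt1Aux.mk_eq_zero_iff, ← this, stmt1Aux.smul_mk, mul_one]
    · intro j _ hji
      rw [DirectSum.component.of]
      simp [hji]
    · simp
  · intro h
    apply Finset.sum_eq_zero
    intro i _
    have : r • (Submodule.Quotient.mk 1 : K[X] ⧸ (K[X] ∙ q i)) = 0 := by
      rw [stmt1Aux.smul_mk, mul_one, stmt1Aux.mk_eq_zero_iff]; exact h i
    rw [this, map_zero]

omit [Fintype ι] in
theorem stmt1Aux.smul_eq_zero_of_dvd (r : K[X]) (h : ∀ i, q i ∣ r)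
    (y : ⨁ i, K[X] ⧸ (K[X] ∙ q i)) : r • y = 0 := by
  induction y using DirectSum.induction_on with
  | zero => simp
  | of i m =>
      obtain ⟨s, rfl⟩ := Submodule.Quotient.mk_surjective _ m
      have : r • (Submodule.Quotient.mk s : K[X] ⧸ (K[X] ∙ q i)) = 0 := by
        rw [stmt1Aux.smul_mk, stmt1Aux.mk_eq_zero_iff]
        exact (h i).mul_right s
      rw [← DirectSum.lof_eq_of K[X], ← map_smul, this, map_zero]
  | add y z hy hz => rw [smul_add, hy, hz, add_zero]

variable {K V : Type*} [Field K] [AddCommGroup V] [Module K V]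

/-- An endomorphism commuting with `φ` as a `K[X]`-linear endomorphism of `AEval' φ`. -/
noncomputable def stmt1Aux.toAEnd (φ ψ : Module.End K V) (h : φ * ψ = ψ * φ) :
    AEval' φ →ₗ[K[X]] AEval' φ :=
  LinearMap.ofAEval φ ((AEval'.of φ).toLinearMap ∘ₗ ψ)
    (fun m => by
      change AEval'.of φ (ψ (φ • m)) = (X : K[X]) • AEval'.of φ (ψ m)
      rw [Module.AEval.X_smul_of]
      change AEval'.of φ (ψ (φ m)) = AEval'.of φ (φ • ψ m)
      change _ = AEval'.of φ (φ (ψ m))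
      rw [← Module.End.mul_apply, ← Module.End.mul_apply, h])

theorem stmt1Aux.toAEnd_apply (φ ψ : Module.End K V) (h : φ * ψ = ψ * φ) (v : V) :
    stmt1Aux.toAEnd φ ψ h (AEval'.of φ v) = AEval'.of φ (ψ v) := rfl

theorem stmt1Aux.ofAEnd_comm (φ : Module.End K V) (g : AEval' φ →ₗ[K[X]] AEval' φ)
    (ψ : Module.End K V)
    (hψ : ∀ v, ψ v = (AEval'.of φ).symm (g (AEval'.of φ v))) : φ * ψ = ψ * φ := by
  ext v
  change φ (ψ v) = ψ (φ v)
  have h1 : AEval'.of φ (φ v) = (X : K[X]) • AEval'.of φ v := by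
    rw [Module.AEval.X_smul_of]; rfl
  conv_rhs => rw [hψ, h1, map_smul, Module.AEval.of_symm_X_smul]
  show φ (ψ v) = φ ((AEval.of K V φ).symm (g ((AEval'.of φ) v)))
  rw [hψ]

end Aux

universe u v

theorem stmt1Aux.main {K : Type u} {V : Type v} [Field K] [AddCommGroup V] [Module K V]
    [FiniteDimensional K V] {n : ℕ} (hn : Module.finrank K V = n)
    (φ : Module.End K V) :
    LinearMap.charpoly φ = minpoly K φ ↔
      Subalgebra.centralizer K ({φ} : Set (Module.End K V)) = Algebra.adjoin K {φ} := by
  classical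
  set μ := minpoly K φ with hμdef
  set χ := LinearMap.charpoly φ with hχdef
  have hμmonic : μ.Monic := minpoly.monic (Algebra.IsIntegral.isIntegral φ)
  have hμ0 : μ ≠ 0 := hμmonic.ne_zero
  have hχmonic : χ.Monic := φ.charpoly_monic
  have hχ0 : χ ≠ 0 := hχmonic.ne_zero
  have hχdeg : χ.natDegree = n := by rw [hχdef, φ.charpoly_natDegree, hn]
  have hdvd : μ ∣ χ := φ.minpoly_dvd_charpoly
  have hiff : χ = μ ↔ μ.natDegree = n := by
    constructor
    · intro h; rw [← h, hχdeg]
    · intro h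
      obtain ⟨c, hc⟩ := hdvd
      have hcmonic : c.Monic := hμmonic.of_mul_monic_left (hc ▸ hχmonic)
      have hcdeg : c.natDegree = 0 := by
        have := hχdeg
        rw [hc, Polynomial.natDegree_mul hμ0 hcmonic.ne_zero, h] at this
        omega
      rw [hc, eq_one_of_monic_natDegree_zero hcmonic hcdeg, mul_one]
  -- the easy inclusion
  have heasy : Algebra.adjoin K {φ} ≤ Subalgebra.centralizer K ({φ} : Set (Module.End K V)) := by
    apply Algebra.adjoin_le
    intro x hx
    rw [Set.mem_singleton_iff] at hx
    subst hx
    rw [SetLike.mem_coe, Subalgebra.mem_centralizer_iff]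
    intro g hg
    rw [Set.mem_singleton_iff] at hg
    subst hg; rfl
  -- the structure theorem decomposition
  have hT : Module.IsTorsion K[X] (AEval' φ) :=
    Module.AEval.isTorsion_of_finiteDimensional K V φ
  have hT' : Module.IsTorsion K[X] (ULift.{u} (AEval' φ)) := by
    intro x
    obtain ⟨a, h⟩ := @hT x.down
    refine ⟨a, ULift.ext _ _ ?_⟩
    simpa using h
  haveI : Module.Finite K[X] (ULift.{u} (AEval' φ)) :=
    Module.Finite.equiv (ULift.moduleEquiv (R := K[X]) (M := AEval' φ)).symm
  obtain ⟨ι, hfin, p, hp, e, ⟨D0⟩⟩ := Module.equiv_directSum_of_isTorsion hT'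
  letI := hfin
  let D : AEval' φ ≃ₗ[K[X]] ⨁ i : ι, K[X] ⧸ (K[X] ∙ p i ^ e i) :=
    ((ULift.moduleEquiv (R := K[X]) (M := AEval' φ)).symm.trans D0)
  have hq0 : ∀ i, p i ^ e i ≠ 0 := fun i => pow_ne_zero _ (hp i).ne_zero
  -- translation: simultaneous divisibility by the prime powers is divisibility by μ
  have key : ∀ r : K[X], (∀ i, p i ^ e i ∣ r) ↔ μ ∣ r := by
    intro r
    constructor
    · intro h
      have hz : ∀ m : AEval' φ, r • m = 0 := by
        intro m
        apply D.injective
        rw [map_smul, map_zero]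
        exact stmt1Aux.smul_eq_zero_of_dvd _ r h (D m)
      apply minpoly.dvd K φ
      ext v
      have h2 := Module.AEval.of_symm_smul (R := K) (M := V) φ r (AEval'.of φ v)
      rw [hz, map_zero] at h2
      have h3 : Polynomial.aeval φ r • v = 0 := by simpa using h2.symm
      simpa [Module.End.smul_def] using h3
    · rintro ⟨c, rfl⟩ i
      have hz : ∀ y : ⨁ i : ι, K[X] ⧸ (K[X] ∙ p i ^ e i), (μ * c) • y = 0 := by
        intro y
        obtain ⟨m, rfl⟩ := D.surjective y
        rw [← map_smul]
        have : (μ * c) • m = 0 := by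
          apply (AEval'.of φ).symm.injective
          rw [Module.AEval.of_symm_smul, map_mul, minpoly.aeval, zero_mul, map_zero]
          simp
        rw [this, map_zero]
      have h1 := hz (DirectSum.lof K[X] ι _ i (Submodule.Quotient.mk 1))
      rw [← map_smul, stmt1Aux.smul_mk, mul_one] at h1
      have h2 := congrArg (DirectSum.component K[X] ι _ i) h1
      rw [DirectSum.component.lof_self, map_zero] at h2
      exact (stmt1Aux.mk_eq_zero_iff _ _).mp h2
  -- dimension bookkeeping
  haveI : ∀ i, Module.Finite K (K[X] ⧸ (K[X] ∙ p i ^ e i)) :=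
    fun i => stmt1Aux.finite_quot _ (hq0 i)
  let e1 : V ≃ₗ[K] ⨁ i : ι, K[X] ⧸ (K[X] ∙ p i ^ e i) :=
    (AEval'.of φ).trans (D.restrictScalars K)
  haveI : FiniteDimensional K (⨁ i : ι, K[X] ⧸ (K[X] ∙ p i ^ e i)) :=
    Module.Finite.equiv e1
  have hNrank : Module.finrank K (⨁ i : ι, K[X] ⧸ (K[X] ∙ p i ^ e i)) = n := by
    rw [← e1.finrank_eq, hn]
  have hsum : ∑ i, (p i ^ e i).natDegree = n := by
    rw [← hNrank, Module.finrank_directSum]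
    exact Finset.sum_congr rfl fun i _ => (stmt1Aux.finrank_quot _ (hq0 i)).symm
  constructor
  · -- charpoly = minpoly → centralizer = adjoin
    intro h
    have hdegμ : μ.natDegree = n := hiff.mp h
    refine le_antisymm ?_ heasy
    intro ψ hψ
    have hcomm : φ * ψ = ψ * φ := by
      rw [Subalgebra.mem_centralizer_iff] at hψ
      exact hψ φ rfl
    -- the generator spans
    have hx : Ideal.torsionOf K[X] _ (stmt1Aux.genx (fun i => p i ^ e i)) =
        Ideal.span {μ} := by
      ext r
      rw [Ideal.mem_torsionOf_iff, stmt1Aux.smul_genx_eq_zero_iff, Ideal.mem_span_singleton]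
      exact key r
    have hfr : Module.finrank K
        ↥(Submodule.span K[X] {stmt1Aux.genx (fun i => p i ^ e i)}) = n := by
      have e2 := ((Ideal.quotTorsionOfEquivSpanSingleton K[X] _
        (stmt1Aux.genx (fun i => p i ^ e i))).restrictScalars K).symm
      rw [e2.finrank_eq, hx]
      rw [show Module.finrank K (K[X] ⧸ Ideal.span {μ}) =
          Module.finrank K (K[X] ⧸ (K[X] ∙ μ)) from rfl]
      rw [stmt1Aux.finrank_quot μ hμ0, hdegμ]
    have hspan : Submodule.span K[X] {stmt1Aux.genx (fun i => p i ^ e i)} = ⊤ := by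
      rw [← Submodule.restrictScalars_eq_top_iff (S := K)]
      apply Submodule.eq_top_of_finrank_eq (V := ⨁ i : ι, K[X] ⧸ (K[X] ∙ p i ^ e i))
      rw [hNrank, ← hfr]
      exact ((Submodule.restrictScalarsEquiv K K[X] _ _).restrictScalars K).finrank_eq
    -- every K[X]-endomorphism is scalar
    set x := stmt1Aux.genx (fun i => p i ^ e i) with hxdef
    set f : (⨁ i : ι, K[X] ⧸ (K[X] ∙ p i ^ e i)) →ₗ[K[X]] _ :=
      D.toLinearMap ∘ₗ (stmt1Aux.toAEnd φ ψ hcomm) ∘ₗ D.symm.toLinearMap with hfdef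
    obtain ⟨s, hs⟩ := Submodule.mem_span_singleton.mp (hspan ▸ Submodule.mem_top (x := f x))
    have hf : f = s • (LinearMap.id : _ →ₗ[K[X]] _) := by
      apply LinearMap.ext_on hspan
      intro z hz
      rw [Set.mem_singleton_iff] at hz
      subst hz
      rw [LinearMap.smul_apply, LinearMap.id_apply]
      exact hs.symm
    have hpsi : ψ = Polynomial.aeval φ s := by
      ext v
      have h3 : stmt1Aux.toAEnd φ ψ hcomm (AEval'.of φ v) = s • (AEval'.of φ v) := by
        apply D.injective
        rw [map_smul]
        have := congrArg (fun (g' : _ →ₗ[K[X]] _) => g' (D (AEval'.of φ v))) hf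
        simp only [hfdef, LinearMap.comp_apply, LinearMap.smul_apply, LinearMap.id_apply,
          LinearMap.coe_comp, LinearEquiv.coe_coe, Function.comp_apply,
          LinearEquiv.symm_apply_apply] at this
        exact this
      rw [stmt1Aux.toAEnd_apply] at h3
      have h4 := congrArg (AEval'.of φ).symm h3
      rw [LinearEquiv.symm_apply_apply, Module.AEval.of_symm_smul,
        LinearEquiv.symm_apply_apply] at h4
      simpa [Module.End.smul_def] using h4
    rw [hpsi]
    exact Polynomial.aeval_mem_adjoin_singleton K φ
  · -- centralizer = adjoin → charpoly = minpoly
    intro hca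
    by_contra hne
    have hdlt : μ.natDegree < n := by
      have hle : μ.natDegree ≤ n := hχdeg ▸ Polynomial.natDegree_le_of_dvd hdvd hχ0
      rcases lt_or_eq_of_le hle with h | h
      · exact h
      · exact absurd (hiff.mpr h) hne
    -- there are two non-coprime prime powers
    have hnpair : ¬ Pairwise fun i j => IsCoprime (p i ^ e i) (p j ^ e j) := by
      intro hcop
      have hdvdμ : ∀ i, p i ^ e i ∣ μ := (key μ).mpr dvd_rfl
      have hprod : (∏ i, p i ^ e i) ∣ μ :=
        Finset.prod_dvd_of_coprime (fun i _ j _ hij => hcop hij) (fun i _ => hdvdμ i)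
      have : n ≤ μ.natDegree := by
        calc n = ∑ i, (p i ^ e i).natDegree := hsum.symm
        _ = (∏ i, p i ^ e i).natDegree :=
            (Polynomial.natDegree_prod _ _ (fun i _ => hq0 i)).symm
        _ ≤ μ.natDegree := Polynomial.natDegree_le_of_dvd hprod hμ0
      omega
    rw [Pairwise] at hnpair
    push_neg at hnpair
    obtain ⟨i, j, hij, hnc⟩ := hnpair
    have hei : e i ≠ 0 := by
      intro h; rw [h, pow_zero] at hnc; exact hnc (isCoprime_one_left)
    have hej : e j ≠ 0 := by
      intro h; rw [h, pow_zero] at hnc; exact hnc (isCoprime_one_right)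
    have hpij : p i ∣ p j := by
      by_contra hnd
      exact hnc (((hp i).coprime_iff_not_dvd.mpr hnd).pow)
    have hdvd_qi : p i ∣ p i ^ e i := dvd_pow_self _ hei
    have hdvd_qj : p i ∣ p j ^ e j := hpij.trans (dvd_pow_self _ hej)
    -- build the offending endomorphism: projection onto the i-th summand
    set f : (⨁ k : ι, K[X] ⧸ (K[X] ∙ p k ^ e k)) →ₗ[K[X]]
        (⨁ k : ι, K[X] ⧸ (K[X] ∙ p k ^ e k)) :=
      (DirectSum.lof K[X] ι _ i) ∘ₗ (DirectSum.component K[X] ι _ i) with hfdef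
    set g : AEval' φ →ₗ[K[X]] AEval' φ :=
      D.symm.toLinearMap ∘ₗ f ∘ₗ D.toLinearMap with hgdef
    set ψ : Module.End K V :=
      (AEval'.of φ).symm.toLinearMap ∘ₗ (g.restrictScalars K) ∘ₗ (AEval'.of φ).toLinearMap
      with hψdef
    have hψ_apply : ∀ v, ψ v = (AEval'.of φ).symm (g (AEval'.of φ v)) := fun v => rfl
    have hmem : ψ ∈ Subalgebra.centralizer K ({φ} : Set (Module.End K V)) := by
      rw [Subalgebra.mem_centralizer_iff]
      intro g' hg'
      rw [Set.mem_singleton_iff] at hg'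
      rw [hg']
      exact stmt1Aux.ofAEnd_comm φ g ψ hψ_apply
    rw [hca, Algebra.adjoin_singleton_eq_range_aeval] at hmem
    obtain ⟨s, hs⟩ := hmem
    -- now f is multiplication by s
    have hg_smul : ∀ m : AEval' φ, g m = s • m := by
      intro m
      have h1 : ψ ((AEval'.of φ).symm m) = Polynomial.aeval φ s ((AEval'.of φ).symm m) := by
        rw [← hs]; rfl
      rw [hψ_apply, LinearEquiv.apply_symm_apply] at h1
      have h2 := congrArg (AEval'.of φ) h1
      rw [LinearEquiv.apply_symm_apply] at h2
      rw [h2]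
      have := Module.AEval.of_aeval_smul (R := K) (M := V) φ s ((AEval'.of φ).symm m)
      rw [LinearEquiv.apply_symm_apply] at this
      rw [← this]
      simp [Module.End.smul_def]
    have hf_smul : ∀ y, f y = s • y := by
      intro y
      obtain ⟨m, rfl⟩ := D.surjective y
      have : f (D m) = D (g m) := by
        rw [hgdef]
        simp only [LinearMap.comp_apply, LinearMap.coe_comp, LinearEquiv.coe_coe,
          Function.comp_apply, LinearEquiv.apply_symm_apply]
      rw [this, hg_smul, map_smul]
    -- evaluate at the two generators
    have hqi : (p i ^ e i) ∣ (s - 1) := by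
      have h1 := hf_smul (DirectSum.lof K[X] ι _ i (Submodule.Quotient.mk 1))
      rw [hfdef] at h1
      simp only [LinearMap.comp_apply, DirectSum.component.lof_self] at h1
      rw [← map_smul, stmt1Aux.smul_mk, mul_one] at h1
      have h2 := congrArg (DirectSum.component K[X] ι _ i) h1
      rw [DirectSum.component.lof_self, DirectSum.component.lof_self] at h2
      rw [← stmt1Aux.mk_eq_zero_iff]
      rw [show ((Submodule.Quotient.mk (s - 1) : K[X] ⧸ (K[X] ∙ p i ^ e i))) =
        Submodule.Quotient.mk s - Submodule.Quotient.mk 1 from (Submodule.Quotient.mk_sub _)]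
      rw [← h2, sub_self]
    have hqj : (p j ^ e j) ∣ s := by
      have h1 := hf_smul (DirectSum.lof K[X] ι _ j (Submodule.Quotient.mk 1))
      rw [hfdef] at h1
      simp only [LinearMap.comp_apply] at h1
      rw [← map_smul, stmt1Aux.smul_mk, mul_one] at h1
      have h2 := congrArg (DirectSum.component K[X] ι _ j) h1
      rw [DirectSum.component.lof_self] at h2
      rw [DirectSum.component.of] at h2
      rw [dif_neg hij] at h2
      rw [← stmt1Aux.mk_eq_zero_iff, h2.symm]
    have : p i ∣ 1 := by
      have h1 : p i ∣ s := dvd_trans hdvd_qj hqj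
      have h2 : p i ∣ s - 1 := hdvd_qi.trans hqi
      have := dvd_sub h1 h2
      simpa using this
    exact (hp i).not_isUnit (isUnit_of_dvd_one this)

/-- The characteristic polynomial of `φ` equals its minimal polynomial iff the
centralizer of `φ` in `End(V)` equals the algebra `K[φ]` of polynomials in `φ`. -/
theorem stmt1 {K V : Type*} [Field K] [CharZero K] [AddCommGroup V] [Module K V]
    [FiniteDimensional K V] {n : ℕ} (hn : Module.finrank K V = n)
    (φ : Module.End K V) :
    LinearMap.charpoly φ = minpoly K φ ↔
      Subalgebra.centralizer K ({φ} : Set (Module.End K V)) = Algebra.adjoin K {φ} := by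
  exact stmt1Aux.main hn φ
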